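/- Let t ≥ 0, y ∈ ℤ, and let j ≥ 0 be an integer. Define Ψ_j(x) = (1/(2πi)) ∮_{|w|=r} dw w^{−(j+1)} (1−w)^{j} w^{−(x−y)} e^{t(w−1)}, where the contour is a positively oriented circle of radius r ∈ (0,1) centered at the origin. Then the series ∑_{x ∈ ℤ} Ψ_j(x) converges absolutely and equals 1 if j = 0 and equals 0 if j ≥ 1. (Note that Ψ_j(x) = 0 for x < y − j.) -/

import Mathlib

/-- `Ψ_j(x) = (1/(2πi)) ∮_{|w|=r} dw w^(-(j+1)) (1-w)^j w^(-(x-y)) e^(t(w-1))`, with the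
contour a positively oriented circle of radius `r ∈ (0,1)` centered at the origin; these
are the functions `Ψ^n_j` of Theorem 2.1, with `y = y_{n-j}` an initial particle position. -/
noncomputable def Psi (t : ℝ) (y : ℤ) (j : ℕ) (r : ℝ) (x : ℤ) : ℂ :=
  (1 / (2 * ↑Real.pi * Complex.I)) *
    ∮ w in C(0, r), w ^ (-(j + 1 : ℤ)) * (1 - w) ^ j * w ^ (-(x - y)) *
      Complex.exp (↑t * (w - 1))

/-- The entire function whose Taylor coefficients are the `Ψ_j(x)`. -/
noncomputable def PsiGen (t : ℝ) (j : ℕ) (w : ℂ) : ℂ :=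
  (1 - w) ^ j * Complex.exp (↑t * (w - 1))

lemma psiGen_differentiable (t : ℝ) (j : ℕ) : Differentiable ℂ (PsiGen t j) := by
  unfold PsiGen
  fun_prop

/-- For `x < y - j`, the integrand is entire, so `Ψ_j(x) = 0`. -/
lemma psi_eq_zero (t : ℝ) (y : ℤ) (j : ℕ) (r : ℝ) (hr : 0 < r) (x : ℤ)
    (hx : x - y + j < 0) : Psi t y j r x = 0 := by
  set m : ℕ := (-(j + 1 : ℤ) + -(x - y)).toNat with hm
  have hme : (-(j + 1 : ℤ) + -(x - y)) = (m : ℤ) := by omega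
  have h0 : (∮ w in C(0, r), w ^ (-(j + 1 : ℤ)) * (1 - w) ^ j * w ^ (-(x - y)) *
      Complex.exp (↑t * (w - 1))) =
      ∮ w in C(0, r), w ^ m * PsiGen t j w := by
    refine circleIntegral.integral_congr hr.le fun w hw => ?_
    have hw0 : w ≠ 0 := by
      simp only [mem_sphere_zero_iff_norm] at hw
      intro h; rw [h] at hw; simp at hw; linarith
    calc w ^ (-(j + 1 : ℤ)) * (1 - w) ^ j * w ^ (-(x - y)) * Complex.exp (↑t * (w - 1))
        = (w ^ (-(j + 1 : ℤ)) * w ^ (-(x - y))) *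
            ((1 - w) ^ j * Complex.exp (↑t * (w - 1))) := by ring
      _ = w ^ m * PsiGen t j w := by
          rw [← zpow_add₀ hw0, hme, zpow_natCast]; rfl
  have hdiff : Differentiable ℂ fun w : ℂ => w ^ m * PsiGen t j w := by
    exact (differentiable_pow m).mul (psiGen_differentiable t j)
  have hz : (∮ w in C(0, r), w ^ m * PsiGen t j w) = 0 := by
    refine Complex.circleIntegral_eq_zero_of_differentiable_on_off_countable hr.le
      Set.countable_empty hdiff.continuous.continuousOn fun z _ => hdiff.differentiableAt
  rw [Psi, h0, hz, mul_zero]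

/-- For `x = y - j + n`, `Ψ_j(x)` is the `n`-th Cauchy–Taylor coefficient of `PsiGen`. -/
lemma psi_eq_coeff (t : ℝ) (y : ℤ) (j : ℕ) (r : ℝ) (hr : 0 < r) (n : ℕ) :
    Psi t y j r (y - j + n) = (cauchyPowerSeries (PsiGen t j) 0 r n) fun _ => 1 := by
  rw [cauchyPowerSeries_apply]
  rw [Psi]
  have h0 : (∮ w in C(0, r), w ^ (-(j + 1 : ℤ)) * (1 - w) ^ j *
        w ^ (-((y - j + n : ℤ) - y)) * Complex.exp (↑t * (w - 1))) =
      ∮ w in C(0, r), (1 / (w - 0)) ^ n • ((w - 0)⁻¹ • PsiGen t j w) := by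
    refine circleIntegral.integral_congr hr.le fun w hw => ?_
    have hw0 : w ≠ 0 := by
      simp only [mem_sphere_zero_iff_norm] at hw
      intro h; rw [h] at hw; simp at hw; linarith
    have hrhs : (1 / (w - 0)) ^ n • ((w - 0)⁻¹ • PsiGen t j w)
        = w ^ (-(n + 1) : ℤ) * PsiGen t j w := by
      rw [smul_eq_mul, smul_eq_mul, sub_zero, one_div, inv_pow, ← zpow_natCast w n,
        ← zpow_neg, ← mul_assoc, ← zpow_neg_one, ← zpow_add₀ hw0]
      congr 2
      ring
    rw [hrhs]
    calc w ^ (-(j + 1 : ℤ)) * (1 - w) ^ j * w ^ (-((y - j + n : ℤ) - y)) *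
          Complex.exp (↑t * (w - 1))
        = (w ^ (-(j + 1 : ℤ)) * w ^ (-((y - j + n : ℤ) - y))) *
            ((1 - w) ^ j * Complex.exp (↑t * (w - 1))) := by ring
      _ = w ^ (-(n + 1) : ℤ) * PsiGen t j w := by
          rw [← zpow_add₀ hw0]
          congr 2
          push_cast
          ring
  rw [h0, smul_eq_mul, one_div]

/-- For `t ≥ 0`, `y ∈ ℤ` and an integer `j ≥ 0`, the series `∑_{x ∈ ℤ} Ψ_j(x)` converges
absolutely and equals `1` if `j = 0` and `0` if `j ≥ 1`. -/
theorem statement10 (t : ℝ) (ht : 0 ≤ t) (y : ℤ) (j : ℕ) (r : ℝ)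
    (hr : r ∈ Set.Ioo (0 : ℝ) 1) :
    Summable (fun x : ℤ => Psi t y j r x) ∧
      ∑' x : ℤ, Psi t y j r x = if j = 0 then 1 else 0 := by
  obtain ⟨hr0, hr1⟩ := hr
  set g := PsiGen t j with hg
  have hdiff := psiGen_differentiable t j
  set rn : NNReal := ⟨r, hr0.le⟩ with hrn
  have hp : HasFPowerSeriesOnBall g (cauchyPowerSeries g 0 rn) 0 rn :=
    hdiff.differentiableOn.hasFPowerSeriesOnBall (by exact_mod_cast hr0)
  have hq : HasFPowerSeriesOnBall g (cauchyPowerSeries g 0 (2 : NNReal)) 0 (2 : NNReal) :=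
    hdiff.differentiableOn.hasFPowerSeriesOnBall (by norm_num)
  have peq : cauchyPowerSeries g 0 rn = cauchyPowerSeries g 0 (2 : NNReal) :=
    hp.hasFPowerSeriesAt.eq_formalMultilinearSeries hq.hasFPowerSeriesAt
  have h1mem : (1 : ℂ) ∈ Metric.eball (0 : ℂ) ((2 : NNReal) : ENNReal) := by
    simp [Metric.mem_eball, edist_eq_enorm_sub]
  have hsum : HasSum (fun n : ℕ => (cauchyPowerSeries g 0 (2 : NNReal) n) fun _ => (1 : ℂ))
      (g (0 + 1)) := hq.hasSum h1mem
  -- transfer to a sum over ℤ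
  set e : ℕ → ℤ := fun n => y - j + n with he
  have hinj : Function.Injective e := by intro a b h; simp only [he] at h; omega
  have hvan : ∀ x : ℤ, x ∉ Set.range e → Psi t y j r x = 0 := by
    intro x hx
    refine psi_eq_zero t y j r hr0 x ?_
    by_contra h
    push_neg at h
    exact hx ⟨(x - y + j).toNat, by simp only [he]; omega⟩
  have hcomp : (fun x : ℤ => Psi t y j r x) ∘ e =
      fun n : ℕ => (cauchyPowerSeries g 0 (2 : NNReal) n) fun _ => (1 : ℂ) := by
    funext n
    have := psi_eq_coeff t y j r hr0 n
    simp only [Function.comp_apply, he]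
    rw [this]
    have : (cauchyPowerSeries (PsiGen t j) 0 r) = cauchyPowerSeries g 0 (2 : NNReal) := by
      rw [← peq]; rfl
    rw [this]
  have hsumZ : HasSum (fun x : ℤ => Psi t y j r x) (g (0 + 1)) := by
    rw [← hinj.hasSum_iff hvan, hcomp]
    exact hsum
  have hg1 : g (0 + 1) = if j = 0 then 1 else 0 := by
    simp only [hg, PsiGen, zero_add, sub_self, mul_zero, Complex.exp_zero, mul_one]
    rcases Nat.eq_zero_or_pos j with h | h
    · simp [h]
    · rw [zero_pow (by omega), if_neg (by omega)]
  exact ⟨hsumZ.summable, by rw [hsumZ.tsum_eq, hg1]⟩
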